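/- Let $m \geq 4$ be even and $k \geq 1$. For every $(\xi,\eta) \in \mathbb{R}^k \times \mathbb{R}^k$ with $(\xi,\eta) \neq (0,0)$, the Hessian matrix of $\phi(\xi,\eta) = |\xi|^m - |\eta|^m$ at $(\xi,\eta)$ has rank at least $k$. -/

import Mathlib

/-- The Hessian matrix `m‖ξ‖^{m-2} I_k + m(m-2)‖ξ‖^{m-4} ξξᵀ` of `ξ ↦ ‖ξ‖^m`. -/
noncomputable def hessPow (k m : ℕ) (ξ : EuclideanSpace ℝ (Fin k)) :
    Matrix (Fin k) (Fin k) ℝ :=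
  ((m : ℝ) * ‖ξ‖ ^ (m - 2)) • (1 : Matrix (Fin k) (Fin k) ℝ)
    + ((m : ℝ) * ((m : ℝ) - 2) * ‖ξ‖ ^ (m - 4)) •
        Matrix.vecMulVec (fun i => ξ i) (fun i => ξ i)

open Matrix

lemma rank_le_fromBlocks_left {k : ℕ} (A D : Matrix (Fin k) (Fin k) ℝ) :
    A.rank ≤ (Matrix.fromBlocks A 0 0 D).rank := by
  have h : @HMul.hMul _ _ _ Matrix.instHMulOfFintypeOfMulOfAddCommMonoid (fromCols (1 : Matrix (Fin k) (Fin k) ℝ) 0 : Matrix (Fin k) (Fin k ⊕ Fin k) ℝ)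
      (@HMul.hMul _ _ _ Matrix.instHMulOfFintypeOfMulOfAddCommMonoid (fromBlocks A 0 0 D : Matrix (Fin k ⊕ Fin k) (Fin k ⊕ Fin k) ℝ) (Matrix.fromRows (1 : Matrix (Fin k) (Fin k) ℝ) 0 : Matrix (Fin k ⊕ Fin k) (Fin k) ℝ)) = A := by
    rw [fromBlocks_mul_fromRows, fromCols_mul_fromRows]
    simp
  conv_lhs => rw [← h]
  exact le_trans (rank_mul_le_right _ _) (rank_mul_le_left _ _)

lemma rank_le_fromBlocks_right {k : ℕ} (A D : Matrix (Fin k) (Fin k) ℝ) :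
    D.rank ≤ (Matrix.fromBlocks A 0 0 D).rank := by
  have h : @HMul.hMul _ _ _ Matrix.instHMulOfFintypeOfMulOfAddCommMonoid (fromCols (0 : Matrix (Fin k) (Fin k) ℝ) 1 : Matrix (Fin k) (Fin k ⊕ Fin k) ℝ)
      (@HMul.hMul _ _ _ Matrix.instHMulOfFintypeOfMulOfAddCommMonoid (fromBlocks A 0 0 D : Matrix (Fin k ⊕ Fin k) (Fin k ⊕ Fin k) ℝ) (Matrix.fromRows (0 : Matrix (Fin k) (Fin k) ℝ) 1 : Matrix (Fin k ⊕ Fin k) (Fin k) ℝ)) = D := by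
    rw [fromBlocks_mul_fromRows, fromCols_mul_fromRows]
    simp
  conv_lhs => rw [← h]
  exact le_trans (rank_mul_le_right _ _) (rank_mul_le_left _ _)

lemma hessPow_posDef {k m : ℕ} (hm : 4 ≤ m) (ξ : EuclideanSpace ℝ (Fin k)) (hξ : ξ ≠ 0) :
    (hessPow k m ξ).PosDef := by
  have hξ' : (0:ℝ) < ‖ξ‖ := norm_pos_iff.mpr hξ
  have hm' : (0:ℝ) < (m:ℝ) := by positivity
  have ha : 0 < (m : ℝ) * ‖ξ‖ ^ (m - 2) := by positivity
  have h2 : (0:ℝ) ≤ (m:ℝ) - 2 := by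
    have : (4:ℝ) ≤ (m:ℝ) := by exact_mod_cast hm
    linarith
  have hb : 0 ≤ (m : ℝ) * ((m : ℝ) - 2) * ‖ξ‖ ^ (m - 4) := by positivity
  set v : Fin k → ℝ := fun i => ξ i with hv
  rw [Matrix.posDef_iff_dotProduct_mulVec]
  constructor
  · ext i j
    simp only [hessPow, Matrix.conjTranspose_apply, Matrix.add_apply, Matrix.smul_apply,
      Matrix.vecMulVec_apply, smul_eq_mul, star_trivial]
    have h1 : (1 : Matrix (Fin k) (Fin k) ℝ) j i = (1 : Matrix (Fin k) (Fin k) ℝ) i j := by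
      simp [Matrix.one_apply, eq_comm]
    rw [h1]; ring
  · intro x hx
    have hmv : Matrix.vecMulVec v v *ᵥ x = (v ⬝ᵥ x) • v := by
      ext i
      simp only [Matrix.mulVec, dotProduct, Matrix.vecMulVec_apply, Pi.smul_apply,
        smul_eq_mul, Finset.sum_mul]
      exact Finset.sum_congr rfl fun j _ => by ring
    have : star x ⬝ᵥ (hessPow k m ξ *ᵥ x)
        = ((m : ℝ) * ‖ξ‖ ^ (m - 2)) * (x ⬝ᵥ x)
          + ((m : ℝ) * ((m : ℝ) - 2) * ‖ξ‖ ^ (m - 4)) * ((v ⬝ᵥ x) * (v ⬝ᵥ x)) := by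
      simp only [hessPow, Matrix.add_mulVec, Matrix.smul_mulVec, Matrix.one_mulVec,
        hmv, dotProduct_add, dotProduct_smul, smul_eq_mul, star_trivial, ← hv]
      try rw [dotProduct_comm x v]
      try ring
    rw [this]
    have hxx : 0 < x ⬝ᵥ x := by
      have := dotProduct_star_self_pos_iff (v := x) |>.mpr hx
      simpa using this
    have : 0 ≤ ((m : ℝ) * ((m : ℝ) - 2) * ‖ξ‖ ^ (m - 4)) * ((v ⬝ᵥ x) * (v ⬝ᵥ x)) :=
      mul_nonneg hb (mul_self_nonneg _)
    nlinarith

/-- For `m ≥ 4` even, `k ≥ 1`, and `(ξ,η) ≠ (0,0)`, the (block diagonal)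
Hessian of `(ξ,η) ↦ ‖ξ‖^m - ‖η‖^m` has rank at least `k`. -/
theorem stmt4 (k m : ℕ) (hk : 1 ≤ k) (hm : 4 ≤ m) (hme : Even m)
    (ξ η : EuclideanSpace ℝ (Fin k)) (hne : (ξ, η) ≠ (0, 0)) :
    k ≤ (Matrix.fromBlocks (hessPow k m ξ) 0 0 (-(hessPow k m η))).rank := by
  by_cases hξ : ξ ≠ 0
  · have h := (hessPow_posDef hm ξ hξ).isUnit
    have := Matrix.rank_of_isUnit _ h
    calc k = (hessPow k m ξ).rank := by simp [this]
      _ ≤ _ := rank_le_fromBlocks_left _ _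
  · push_neg at hξ
    have hη : η ≠ 0 := by
      intro h; exact hne (by simp [hξ, h])
    have h := ((hessPow_posDef hm η hη).isUnit).neg
    have := Matrix.rank_of_isUnit _ h
    calc k = (-(hessPow k m η)).rank := by simp [this]
      _ ≤ _ := rank_le_fromBlocks_right _ _
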